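/- Let K : [0,∞)³ → [0,∞) be measurable, symmetric in its first two arguments, and bounded: K ≤ Λ < ∞. Then for any given initial probability measure μ₀ on [0,∞), there is at most one family (μ_t)_{t≥0} of probability measures on [0,∞) solving the weak isotropic 4-wave kinetic equation ⟨f, μ_t⟩ = ⟨f, μ₀⟩ + ∫₀ᵗ ⟨f, Q(μ_s)⟩ ds for all bounded continuous f: any two such solutions with the same initial datum coincide for all t ≥ 0. -/

import Mathlib

open MeasureTheory Set Classical
open scoped NNReal ENNReal

noncomputable section

/-- The collision domain `D = {(ω₁,ω₂,ω₃) ∈ [0,∞)³ : ω₁ + ω₂ ≥ ω₃}`. -/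
def Ddom : Set (ℝ × ℝ × ℝ) :=
  {p | 0 ≤ p.1 ∧ 0 ≤ p.2.1 ∧ 0 ≤ p.2.2 ∧ p.2.2 ≤ p.1 + p.2.1}

/-- Integrand of the weak collision operator (with the indicator of `D` built in). -/
def collisionIntegrand (K : ℝ → ℝ → ℝ → ℝ) (f : ℝ → ℝ) (p : ℝ × ℝ × ℝ) : ℝ :=
  if p ∈ Ddom then
    (f (p.1 + p.2.1 - p.2.2) + f p.2.2 - f p.2.1 - f p.1) * K p.1 p.2.1 p.2.2
  else 0

/-- `⟨f, Q(μ)⟩`. -/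
def Qpair (K : ℝ → ℝ → ℝ → ℝ) (μ : Measure ℝ) (f : ℝ → ℝ) : ℝ :=
  (1 / 2) * ∫ p, collisionIntegrand K f p ∂(μ.prod (μ.prod μ))

/-- A family of probability measures on `[0,∞)` solving the weak isotropic 4-wave
kinetic equation against all bounded continuous test functions. -/
def IsWeakSolutionCb (K : ℝ → ℝ → ℝ → ℝ) (μ₀ : Measure ℝ) (μ : ℝ → Measure ℝ) : Prop :=
  (∀ t, 0 ≤ t → IsProbabilityMeasure (μ t) ∧ μ t (Set.Iio 0) = 0) ∧
  ∀ f : ℝ → ℝ, Continuous f → (∃ C, ∀ ω, |f ω| ≤ C) → ∀ t, 0 ≤ t →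
    ∫ ω, f ω ∂(μ t) = ∫ ω, f ω ∂μ₀ + ∫ s in Set.Ioc (0 : ℝ) t, Qpair K (μ s) f


section AuxA

variable {K : ℝ → ℝ → ℝ → ℝ} {Λ : ℝ}

lemma measurableSet_Ddom : MeasurableSet Ddom := by
  have : Ddom = {p : ℝ × ℝ × ℝ | 0 ≤ p.1} ∩ ({p | 0 ≤ p.2.1} ∩ ({p | 0 ≤ p.2.2} ∩
      {p | p.2.2 ≤ p.1 + p.2.1})) := by
    ext p; simp [Ddom, and_assoc]
  rw [this]
  exact (measurableSet_le measurable_const measurable_fst).inter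
    ((measurableSet_le measurable_const (measurable_fst.comp measurable_snd)).inter
      ((measurableSet_le measurable_const (measurable_snd.comp measurable_snd)).inter
        (measurableSet_le (measurable_snd.comp measurable_snd)
          (measurable_fst.add (measurable_fst.comp measurable_snd)))))

lemma abs_collisionIntegrand_le (hKbd : ∀ a b c : ℝ, 0 ≤ K a b c ∧ K a b c ≤ Λ)
    {f : ℝ → ℝ} {C : ℝ} (hC : ∀ ω, |f ω| ≤ C) (p : ℝ × ℝ × ℝ) :
    |collisionIntegrand K f p| ≤ 4 * C * Λ := by
  have hC0 : 0 ≤ C := le_trans (abs_nonneg _) (hC 0)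
  have hΛ0 : 0 ≤ Λ := le_trans (hKbd 0 0 0).1 (hKbd 0 0 0).2
  unfold collisionIntegrand
  split
  · rw [abs_mul]
    have h1 : |f (p.1 + p.2.1 - p.2.2) + f p.2.2 - f p.2.1 - f p.1| ≤ 4 * C := by
      have a1 := abs_le.1 (hC (p.1 + p.2.1 - p.2.2))
      have a2 := abs_le.1 (hC p.2.2)
      have a3 := abs_le.1 (hC p.2.1)
      have a4 := abs_le.1 (hC p.1)
      rw [abs_le]; constructor <;> [linarith; linarith]
    have h2 : |K p.1 p.2.1 p.2.2| ≤ Λ := by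
      rw [abs_of_nonneg (hKbd _ _ _).1]; exact (hKbd _ _ _).2
    calc |f (p.1 + p.2.1 - p.2.2) + f p.2.2 - f p.2.1 - f p.1| * |K p.1 p.2.1 p.2.2|
        ≤ (4 * C) * Λ := mul_le_mul h1 h2 (abs_nonneg _) (by positivity)
      _ = 4 * C * Λ := by ring
  · simpa using by positivity

lemma measurable_collisionIntegrand
    (hK : Measurable fun p : ℝ × ℝ × ℝ => K p.1 p.2.1 p.2.2)
    {f : ℝ → ℝ} (hf : Measurable f) : Measurable (collisionIntegrand K f) := by
  unfold collisionIntegrand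
  refine Measurable.ite measurableSet_Ddom (Measurable.mul ?_ hK) measurable_const
  have m1 : Measurable fun p : ℝ × ℝ × ℝ => p.1 := measurable_fst
  have m2 : Measurable fun p : ℝ × ℝ × ℝ => p.2.1 := measurable_fst.comp measurable_snd
  have m3 : Measurable fun p : ℝ × ℝ × ℝ => p.2.2 := measurable_snd.comp measurable_snd
  exact (((hf.comp ((m1.add m2).sub m3)).add (hf.comp m3)).sub (hf.comp m2)).sub (hf.comp m1)

lemma integrable_collisionIntegrand
    (hK : Measurable fun p : ℝ × ℝ × ℝ => K p.1 p.2.1 p.2.2)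
    (hKbd : ∀ a b c : ℝ, 0 ≤ K a b c ∧ K a b c ≤ Λ)
    {f : ℝ → ℝ} {C : ℝ} (hf : Measurable f) (hC : ∀ ω, |f ω| ≤ C)
    (P : Measure (ℝ × ℝ × ℝ)) [IsFiniteMeasure P] :
    Integrable (collisionIntegrand K f) P :=
  ⟨(measurable_collisionIntegrand hK hf).aestronglyMeasurable,
    HasFiniteIntegral.of_bounded (C := 4 * C * Λ)
      (Filter.Eventually.of_forall fun p => by
        simpa [Real.norm_eq_abs] using abs_collisionIntegrand_le hKbd hC p)⟩

lemma abs_Qpair_le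
    (hK : Measurable fun p : ℝ × ℝ × ℝ => K p.1 p.2.1 p.2.2)
    (hKbd : ∀ a b c : ℝ, 0 ≤ K a b c ∧ K a b c ≤ Λ)
    {f : ℝ → ℝ} {C : ℝ} (hf : Measurable f) (hC : ∀ ω, |f ω| ≤ C)
    (m : Measure ℝ) [IsProbabilityMeasure m] : |Qpair K m f| ≤ 2 * C * Λ := by
  have h := norm_integral_le_of_norm_le_const (μ := m.prod (m.prod m))
    (f := collisionIntegrand K f) (C := 4 * C * Λ)
    (Filter.Eventually.of_forall fun p => by
      simpa [Real.norm_eq_abs] using abs_collisionIntegrand_le hKbd hC p)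
  simp only [probReal_univ, mul_one] at h
  rw [Qpair, abs_mul]
  rw [Real.norm_eq_abs] at h
  calc |(1:ℝ)/2| * |∫ p, collisionIntegrand K f p ∂(m.prod (m.prod m))|
      ≤ |(1:ℝ)/2| * (4 * C * Λ) := by
        apply mul_le_mul_of_nonneg_left h (abs_nonneg _)
    _ = 2 * C * Λ := by rw [abs_of_nonneg]; ring; norm_num

lemma Qpair_add
    (hK : Measurable fun p : ℝ × ℝ × ℝ => K p.1 p.2.1 p.2.2)
    (hKbd : ∀ a b c : ℝ, 0 ≤ K a b c ∧ K a b c ≤ Λ)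
    {f g : ℝ → ℝ} {Cf Cg : ℝ} (hfm : Measurable f) (hgm : Measurable g)
    (hCf : ∀ ω, |f ω| ≤ Cf) (hCg : ∀ ω, |g ω| ≤ Cg)
    (m : Measure ℝ) [IsProbabilityMeasure m] :
    Qpair K m (fun ω => f ω + g ω) = Qpair K m f + Qpair K m g := by
  unfold Qpair
  rw [← mul_add, ← integral_add (integrable_collisionIntegrand hK hKbd hfm hCf _)
    (integrable_collisionIntegrand hK hKbd hgm hCg _)]
  congr 1
  apply integral_congr_ae
  apply Filter.Eventually.of_forall
  intro p
  unfold collisionIntegrand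
  by_cases hp : p ∈ Ddom <;> simp only [hp, if_true, if_false] <;> ring

end AuxA

def tvDist (m n : Measure ℝ) : ℝ :=
  sSup ((fun f : ℝ → ℝ => |(∫ ω, f ω ∂m) - ∫ ω, f ω ∂n|) ''
    {f | Continuous f ∧ ∀ ω, |f ω| ≤ 1})

section AuxB

lemma integrable_of_bounded_continuous {f : ℝ → ℝ} {C : ℝ} (hf : Continuous f)
    (hC : ∀ ω, |f ω| ≤ C) (m : Measure ℝ) [IsFiniteMeasure m] : Integrable f m :=
  ⟨hf.aestronglyMeasurable, HasFiniteIntegral.of_bounded (C := C)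
    (Filter.Eventually.of_forall fun ω => by simpa [Real.norm_eq_abs] using hC ω)⟩

lemma tv_zero_mem (m n : Measure ℝ) :
    (0:ℝ) ∈ ((fun f : ℝ → ℝ => |(∫ ω, f ω ∂m) - ∫ ω, f ω ∂n|) ''
      {f | Continuous f ∧ ∀ ω, |f ω| ≤ 1}) := by
  refine ⟨fun _ => 0, ⟨continuous_const, fun ω => by simp⟩, by simp⟩

lemma tv_elem_le_two (m n : Measure ℝ) [IsProbabilityMeasure m] [IsProbabilityMeasure n] :
    ∀ x ∈ ((fun f : ℝ → ℝ => |(∫ ω, f ω ∂m) - ∫ ω, f ω ∂n|) ''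
      {f | Continuous f ∧ ∀ ω, |f ω| ≤ 1}), x ≤ 2 := by
  rintro x ⟨f, ⟨hfc, hfb⟩, rfl⟩
  have h1 : ‖∫ ω, f ω ∂m‖ ≤ 1 * (m univ).toReal :=
    norm_integral_le_of_norm_le_const
      (Filter.Eventually.of_forall fun ω => by simpa [Real.norm_eq_abs] using hfb ω)
  have h2 : ‖∫ ω, f ω ∂n‖ ≤ 1 * (n univ).toReal :=
    norm_integral_le_of_norm_le_const
      (Filter.Eventually.of_forall fun ω => by simpa [Real.norm_eq_abs] using hfb ω)
  simp only [measure_univ, ENNReal.toReal_one, mul_one, Real.norm_eq_abs] at h1 h2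
  calc |(∫ ω, f ω ∂m) - ∫ ω, f ω ∂n| ≤ |∫ ω, f ω ∂m| + |∫ ω, f ω ∂n| := abs_sub _ _
    _ ≤ 2 := by linarith

lemma tv_bddAbove (m n : Measure ℝ) [IsProbabilityMeasure m] [IsProbabilityMeasure n] :
    BddAbove ((fun f : ℝ → ℝ => |(∫ ω, f ω ∂m) - ∫ ω, f ω ∂n|) ''
      {f | Continuous f ∧ ∀ ω, |f ω| ≤ 1}) :=
  ⟨2, tv_elem_le_two m n⟩

lemma tvDist_nonneg (m n : Measure ℝ) [IsProbabilityMeasure m] [IsProbabilityMeasure n] :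
    0 ≤ tvDist m n :=
  le_csSup (tv_bddAbove m n) (tv_zero_mem m n)

lemma tvDist_le_two (m n : Measure ℝ) [IsProbabilityMeasure m] [IsProbabilityMeasure n] :
    tvDist m n ≤ 2 :=
  Real.sSup_le (tv_elem_le_two m n) (by norm_num)

lemma abs_le_tvDist {m n : Measure ℝ} [IsProbabilityMeasure m] [IsProbabilityMeasure n]
    {f : ℝ → ℝ} (hfc : Continuous f) (hfb : ∀ ω, |f ω| ≤ 1) :
    |(∫ ω, f ω ∂m) - ∫ ω, f ω ∂n| ≤ tvDist m n :=
  le_csSup (tv_bddAbove m n) ⟨f, ⟨hfc, hfb⟩, rfl⟩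

lemma clamp_dist_le {a b : ℝ} (ha : |a| ≤ 1) : |max (-1) (min 1 b) - a| ≤ |b - a| := by
  rcases abs_le.1 ha with ⟨ha1, ha2⟩
  rcases le_total b (-1) with hb | hb
  · rw [min_eq_right (by linarith), max_eq_left (by linarith)]
    rw [abs_of_nonpos (by linarith), abs_of_nonpos (by linarith)]; linarith
  · rcases le_total 1 b with hb2 | hb2
    · rw [min_eq_left hb2, max_eq_right (by norm_num)]
      rw [abs_of_nonneg (by linarith), abs_of_nonneg (by linarith)]; linarith
    · rw [min_eq_right hb2, max_eq_right hb]

/-- Key TV lemma: bounded measurable test functions are dominated by the sup over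
bounded continuous test functions. -/
lemma abs_integral_sub_le_tvDist (m n : Measure ℝ) [IsProbabilityMeasure m]
    [IsProbabilityMeasure n] {h : ℝ → ℝ} (hmeas : Measurable h) {M : ℝ}
    (hM : ∀ x, |h x| ≤ M) :
    |(∫ x, h x ∂m) - ∫ x, h x ∂n| ≤ M * tvDist m n := by
  have hM0 : 0 ≤ M := le_trans (abs_nonneg _) (hM 0)
  set ρ : Measure ℝ := m + n with hρ
  have hmρ : m ≪ ρ := Measure.absolutelyContinuous_of_le (Measure.le_add_right le_rfl)
  have hnρ : n ≪ ρ := Measure.absolutelyContinuous_of_le (Measure.le_add_left le_rfl)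
  set p : ℝ → ℝ := fun x => (m.rnDeriv ρ x).toReal with hp
  set q : ℝ → ℝ := fun x => (n.rnDeriv ρ x).toReal with hq
  have hpm : Measurable p := (Measure.measurable_rnDeriv m ρ).ennreal_toReal
  have hqm : Measurable q := (Measure.measurable_rnDeriv n ρ).ennreal_toReal
  have hIp : Integrable p ρ := Measure.integrable_toReal_rnDeriv
  have hIq : Integrable q ρ := Measure.integrable_toReal_rnDeriv
  have hIu : Integrable (fun x => p x - q x) ρ := hIp.sub hIq
  have idm : ∀ g : ℝ → ℝ, (∫ x, p x * g x ∂ρ) = ∫ x, g x ∂m := by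
    intro g
    simpa [smul_eq_mul] using MeasureTheory.integral_rnDeriv_smul (μ := m) (ν := ρ) hmρ (f := g)
  have idn : ∀ g : ℝ → ℝ, (∫ x, q x * g x ∂ρ) = ∫ x, g x ∂n := by
    intro g
    simpa [smul_eq_mul] using MeasureTheory.integral_rnDeriv_smul (μ := n) (ν := ρ) hnρ (f := g)
  -- a.e. bound |p - q| ≤ 1
  have hu_le : ∀ᵐ x ∂ρ, |p x - q x| ≤ 1 := by
    have h1 : m.rnDeriv ρ ≤ᵐ[ρ] 1 :=
      Measure.rnDeriv_le_one_of_le (Measure.le_add_right le_rfl)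
    have h2 : n.rnDeriv ρ ≤ᵐ[ρ] 1 :=
      Measure.rnDeriv_le_one_of_le (Measure.le_add_left le_rfl)
    filter_upwards [h1, h2] with x hx1 hx2
    have hp1 : p x ≤ 1 := by
      have := ENNReal.toReal_mono (by simp) hx1
      simpa using this
    have hq1 : q x ≤ 1 := by
      have := ENNReal.toReal_mono (by simp) hx2
      simpa using this
    have hp0 : 0 ≤ p x := ENNReal.toReal_nonneg
    have hq0 : 0 ≤ q x := ENNReal.toReal_nonneg
    rw [abs_sub_le_iff]; constructor <;> linarith
  -- the main TV estimate for the L¹ difference of densities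
  have main : (∫ x, |p x - q x| ∂ρ) ≤ tvDist m n := by
    refine le_of_forall_pos_le_add fun ε hε => ?_
    set s : ℝ → ℝ := fun x => if 0 ≤ p x - q x then 1 else -1 with hs
    have hsmeas : Measurable s :=
      Measurable.ite (measurableSet_le measurable_const (hpm.sub hqm))
        measurable_const measurable_const
    have hsb : ∀ x, ‖s x‖ ≤ 1 := by
      intro x; rw [Real.norm_eq_abs, hs]; dsimp only; split_ifs <;> norm_num
    have hsint : Integrable s ρ :=
      ⟨hsmeas.aestronglyMeasurable, HasFiniteIntegral.of_bounded (C := 1)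
        (Filter.Eventually.of_forall hsb)⟩
    obtain ⟨g, hg, hgint⟩ := hsint.exists_boundedContinuous_integral_sub_le (half_pos hε)
    set g' : ℝ → ℝ := fun x => max (-1) (min 1 (g x)) with hg'
    have hg'c : Continuous g' := continuous_const.max (continuous_const.min g.continuous)
    have hg'b : ∀ ω, |g' ω| ≤ 1 := fun ω =>
      abs_le.2 ⟨le_max_left _ _, max_le (by norm_num) (min_le_left _ _)⟩
    have hsg' : ∀ x, |s x - g' x| ≤ ‖s x - g x‖ := by
      intro x
      rw [abs_sub_comm, Real.norm_eq_abs, abs_sub_comm (s x)]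
      exact clamp_dist_le (by rw [hs]; dsimp only; split_ifs <;> norm_num)
    have habs : ∀ x, |p x - q x| = s x * (p x - q x) := by
      intro x
      rw [hs]; dsimp only
      split_ifs with h0
      · rw [one_mul]; exact abs_of_nonneg h0
      · rw [abs_of_neg (lt_of_not_ge h0)]; ring
    have hint_su : Integrable (fun x => s x * (p x - q x)) ρ :=
      hIu.bdd_mul hsmeas.aestronglyMeasurable (c := 1) (Filter.Eventually.of_forall hsb)
    have hint_g'u : Integrable (fun x => g' x * (p x - q x)) ρ :=
      hIu.bdd_mul hg'c.aestronglyMeasurable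
        (c := 1) (Filter.Eventually.of_forall fun x => by rw [Real.norm_eq_abs]; exact hg'b x)
    have step1 : (∫ x, |p x - q x| ∂ρ) = ∫ x, s x * (p x - q x) ∂ρ :=
      integral_congr_ae (Filter.Eventually.of_forall habs)
    have hint_sg'u : Integrable (fun x => (s x - g' x) * (p x - q x)) ρ :=
      hIu.bdd_mul (hsmeas.aestronglyMeasurable.sub hg'c.aestronglyMeasurable)
        (c := 2) (Filter.Eventually.of_forall fun x => by
          rw [Real.norm_eq_abs]
          calc |s x - g' x| ≤ |s x| + |g' x| := abs_sub _ _
            _ ≤ 2 := by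
                have h1 := hsb x; rw [Real.norm_eq_abs] at h1
                have h2 := hg'b x; linarith)
    have step2 : (∫ x, s x * (p x - q x) ∂ρ)
        = (∫ x, g' x * (p x - q x) ∂ρ) + ∫ x, (s x - g' x) * (p x - q x) ∂ρ := by
      rw [← integral_add hint_g'u hint_sg'u]
      apply integral_congr_ae
      exact Filter.Eventually.of_forall fun x => by ring
    have step3 : (∫ x, g' x * (p x - q x) ∂ρ) ≤ tvDist m n := by
      have e1 : (∫ x, g' x * (p x - q x) ∂ρ)
          = (∫ x, g' x ∂m) - ∫ x, g' x ∂n := by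
        have l1 : (∫ x, p x * g' x ∂ρ) = ∫ x, g' x ∂m := idm g'
        have l2 : (∫ x, q x * g' x ∂ρ) = ∫ x, g' x ∂n := idn g'
        rw [← l1, ← l2, ← integral_sub]
        · congr 1; funext x; ring
        · exact hIp.bdd_mul hg'c.aestronglyMeasurable
            (c := 1) (Filter.Eventually.of_forall fun x => by rw [Real.norm_eq_abs]; exact hg'b x) |>.congr
            (Filter.Eventually.of_forall fun x => by ring) |>.congr
            (Filter.Eventually.of_forall fun x => rfl)
        · exact hIq.bdd_mul hg'c.aestronglyMeasurable
            (c := 1) (Filter.Eventually.of_forall fun x => by rw [Real.norm_eq_abs]; exact hg'b x) |>.congr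
            (Filter.Eventually.of_forall fun x => by ring)
      rw [e1]
      exact le_trans (le_abs_self _) (abs_le_tvDist hg'c hg'b)
    have step4 : (∫ x, (s x - g' x) * (p x - q x) ∂ρ) ≤ ε := by
      have hb : ∀ᵐ x ∂ρ, (s x - g' x) * (p x - q x) ≤ ‖s x - g x‖ := by
        filter_upwards [hu_le] with x hx
        calc (s x - g' x) * (p x - q x) ≤ |(s x - g' x) * (p x - q x)| := le_abs_self _
          _ = |s x - g' x| * |p x - q x| := abs_mul _ _
          _ ≤ ‖s x - g x‖ * 1 := mul_le_mul (hsg' x) hx (abs_nonneg _) (norm_nonneg _)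
          _ = ‖s x - g x‖ := mul_one _
      have hint1 := hint_sg'u
      have hint2 : Integrable (fun x => ‖s x - g x‖) ρ := (hsint.sub hgint).norm
      calc (∫ x, (s x - g' x) * (p x - q x) ∂ρ) ≤ ∫ x, ‖s x - g x‖ ∂ρ :=
            integral_mono_ae hint1 hint2 hb
        _ ≤ ε / 2 := hg
        _ ≤ ε := by linarith
    calc (∫ x, |p x - q x| ∂ρ) = _ := step1
      _ = _ := step2
      _ ≤ tvDist m n + ε := add_le_add step3 step4
  -- put it together
  have key : (∫ x, h x ∂m) - ∫ x, h x ∂n = ∫ x, (p x - q x) * h x ∂ρ := by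
    rw [← idm h, ← idn h, ← integral_sub]
    · congr 1; funext x; ring
    · exact hIp.bdd_mul hmeas.aestronglyMeasurable
        (c := M) (Filter.Eventually.of_forall fun x => by rw [Real.norm_eq_abs]; exact hM x) |>.congr
        (Filter.Eventually.of_forall fun x => by ring)
    · exact hIq.bdd_mul hmeas.aestronglyMeasurable
        (c := M) (Filter.Eventually.of_forall fun x => by rw [Real.norm_eq_abs]; exact hM x) |>.congr
        (Filter.Eventually.of_forall fun x => by ring)
  rw [key]
  have hint : Integrable (fun x => (p x - q x) * h x) ρ :=
    hIu.bdd_mul hmeas.aestronglyMeasurable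
      (c := M) (Filter.Eventually.of_forall fun x => by rw [Real.norm_eq_abs]; exact hM x) |>.congr
      (Filter.Eventually.of_forall fun x => by ring)
  calc |∫ x, (p x - q x) * h x ∂ρ| ≤ ∫ x, |p x - q x| * |h x| ∂ρ := by
        simpa [Real.norm_eq_abs, abs_mul] using norm_integral_le_integral_norm
          (f := fun x => (p x - q x) * h x) (μ := ρ)
    _ ≤ ∫ x, M * |p x - q x| ∂ρ := by
        apply integral_mono_ae
          (hint.abs.congr (Filter.Eventually.of_forall fun x => abs_mul _ _))
          (hIu.abs.const_mul M)
        apply Filter.Eventually.of_forall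
        intro x
        calc |p x - q x| * |h x| ≤ |p x - q x| * M :=
              mul_le_mul_of_nonneg_left (hM x) (abs_nonneg _)
          _ = M * |p x - q x| := mul_comm _ _
    _ = M * ∫ x, |p x - q x| ∂ρ := integral_const_mul M _
    _ ≤ M * tvDist m n := mul_le_mul_of_nonneg_left main hM0

end AuxB

section AuxC

variable {K : ℝ → ℝ → ℝ → ℝ} {Λ : ℝ}

lemma abs_Qpair_sub_le
    (hK : Measurable fun p : ℝ × ℝ × ℝ => K p.1 p.2.1 p.2.2)
    (hKbd : ∀ a b c : ℝ, 0 ≤ K a b c ∧ K a b c ≤ Λ)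
    {f : ℝ → ℝ} (hf : Continuous f) (hC : ∀ ω, |f ω| ≤ 1)
    (m n : Measure ℝ) [IsProbabilityMeasure m] [IsProbabilityMeasure n] :
    |Qpair K m f - Qpair K n f| ≤ 6 * Λ * tvDist m n := by
  have hΛ0 : 0 ≤ Λ := le_trans (hKbd 0 0 0).1 (hKbd 0 0 0).2
  set G := collisionIntegrand K f with hGdef
  have hGm : Measurable G := measurable_collisionIntegrand hK hf.measurable
  have hGb : ∀ p, |G p| ≤ 4 * Λ := fun p => by
    simpa using abs_collisionIntegrand_le hKbd hC p
  have hGsm : StronglyMeasurable G := hGm.stronglyMeasurable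
  have hassoc : Measurable fun y : (ℝ × ℝ) × ℝ => (y.1.1, y.1.2, y.2) :=
    ((measurable_fst.comp measurable_fst).prodMk
      ((measurable_snd.comp measurable_fst).prodMk measurable_snd))
  -- inner integrals
  set Im : ℝ × ℝ → ℝ := fun x => ∫ c, G (x.1, x.2, c) ∂m with hImdef
  set In : ℝ × ℝ → ℝ := fun x => ∫ c, G (x.1, x.2, c) ∂n with hIndef
  have hIm_sm : StronglyMeasurable Im :=
    (hGsm.comp_measurable hassoc).integral_prod_right'
  have hIn_sm : StronglyMeasurable In :=
    (hGsm.comp_measurable hassoc).integral_prod_right'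
  have hIm_b : ∀ x : ℝ × ℝ, |Im x| ≤ 4 * Λ := by
    intro x
    have := norm_integral_le_of_norm_le_const (μ := m) (f := fun c => G (x.1, x.2, c))
      (C := 4 * Λ) (Filter.Eventually.of_forall fun c => by
        simpa [Real.norm_eq_abs] using hGb (x.1, x.2, c))
    simpa [Real.norm_eq_abs] using this
  have hIn_b : ∀ x : ℝ × ℝ, |In x| ≤ 4 * Λ := by
    intro x
    have := norm_integral_le_of_norm_le_const (μ := n) (f := fun c => G (x.1, x.2, c))
      (C := 4 * Λ) (Filter.Eventually.of_forall fun c => by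
        simpa [Real.norm_eq_abs] using hGb (x.1, x.2, c))
    simpa [Real.norm_eq_abs] using this
  set IMm : ℝ → ℝ := fun a => ∫ b, Im (a, b) ∂m with hIMmdef
  set IMn : ℝ → ℝ := fun a => ∫ b, Im (a, b) ∂n with hIMndef
  set INn : ℝ → ℝ := fun a => ∫ b, In (a, b) ∂n with hINndef
  have hIMm_sm : StronglyMeasurable IMm := hIm_sm.integral_prod_right'
  have hIMn_sm : StronglyMeasurable IMn := hIm_sm.integral_prod_right'
  have hINn_sm : StronglyMeasurable INn := hIn_sm.integral_prod_right'
  have hIMm_b : ∀ a : ℝ, |IMm a| ≤ 4 * Λ := by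
    intro a
    have := norm_integral_le_of_norm_le_const (μ := m) (f := fun b => Im (a, b))
      (C := 4 * Λ) (Filter.Eventually.of_forall fun b => by
        simpa [Real.norm_eq_abs] using hIm_b (a, b))
    simpa [Real.norm_eq_abs] using this
  have hIMn_b : ∀ a : ℝ, |IMn a| ≤ 4 * Λ := by
    intro a
    have := norm_integral_le_of_norm_le_const (μ := n) (f := fun b => Im (a, b))
      (C := 4 * Λ) (Filter.Eventually.of_forall fun b => by
        simpa [Real.norm_eq_abs] using hIm_b (a, b))
    simpa [Real.norm_eq_abs] using this
  have hINn_b : ∀ a : ℝ, |INn a| ≤ 4 * Λ := by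
    intro a
    have := norm_integral_le_of_norm_le_const (μ := n) (f := fun b => In (a, b))
      (C := 4 * Λ) (Filter.Eventually.of_forall fun b => by
        simpa [Real.norm_eq_abs] using hIn_b (a, b))
    simpa [Real.norm_eq_abs] using this
  -- slice integrability
  have hslice : ∀ (a : ℝ) (P : Measure (ℝ × ℝ)) [IsFiniteMeasure P],
      Integrable (fun q : ℝ × ℝ => G (a, q)) P := by
    intro a P _
    exact ⟨(hGm.comp (measurable_const.prodMk measurable_id)).aestronglyMeasurable,
      HasFiniteIntegral.of_bounded (C := 4 * Λ) (Filter.Eventually.of_forall fun q => by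
        simpa [Real.norm_eq_abs] using hGb (a, q))⟩
  have hslice2 : ∀ (a b : ℝ) (P : Measure ℝ) [IsFiniteMeasure P],
      Integrable (fun c : ℝ => G (a, b, c)) P := by
    intro a b P _
    exact ⟨(hGm.comp (measurable_const.prodMk
        (measurable_const.prodMk measurable_id))).aestronglyMeasurable,
      HasFiniteIntegral.of_bounded (C := 4 * Λ) (Filter.Eventually.of_forall fun c => by
        simpa [Real.norm_eq_abs] using hGb (a, b, c))⟩
  have hmidm : ∀ (a : ℝ) (P : Measure ℝ) [IsFiniteMeasure P],
      Integrable (fun b : ℝ => Im (a, b)) P := by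
    intro a P _
    exact ⟨(hIm_sm.measurable.comp
        (measurable_const.prodMk measurable_id)).aestronglyMeasurable,
      HasFiniteIntegral.of_bounded (C := 4 * Λ) (Filter.Eventually.of_forall fun b => by
        simpa [Real.norm_eq_abs] using hIm_b (a, b))⟩
  have hmidn : ∀ (a : ℝ) (P : Measure ℝ) [IsFiniteMeasure P],
      Integrable (fun b : ℝ => In (a, b)) P := by
    intro a P _
    exact ⟨(hIn_sm.measurable.comp
        (measurable_const.prodMk measurable_id)).aestronglyMeasurable,
      HasFiniteIntegral.of_bounded (C := 4 * Λ) (Filter.Eventually.of_forall fun b => by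
        simpa [Real.norm_eq_abs] using hIn_b (a, b))⟩
  have houtIMm : ∀ (P : Measure ℝ) [IsFiniteMeasure P], Integrable IMm P := by
    intro P _
    exact ⟨hIMm_sm.aestronglyMeasurable, HasFiniteIntegral.of_bounded (C := 4 * Λ)
      (Filter.Eventually.of_forall fun a => by simpa [Real.norm_eq_abs] using hIMm_b a)⟩
  have houtIMn : ∀ (P : Measure ℝ) [IsFiniteMeasure P], Integrable IMn P := by
    intro P _
    exact ⟨hIMn_sm.aestronglyMeasurable, HasFiniteIntegral.of_bounded (C := 4 * Λ)
      (Filter.Eventually.of_forall fun a => by simpa [Real.norm_eq_abs] using hIMn_b a)⟩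
  have houtINn : ∀ (P : Measure ℝ) [IsFiniteMeasure P], Integrable INn P := by
    intro P _
    exact ⟨hINn_sm.aestronglyMeasurable, HasFiniteIntegral.of_bounded (C := 4 * Λ)
      (Filter.Eventually.of_forall fun a => by simpa [Real.norm_eq_abs] using hINn_b a)⟩
  -- Fubini identities
  have eA1 : (∫ p, G p ∂(m.prod (m.prod m))) = ∫ a, IMm a ∂m := by
    rw [integral_prod _ (integrable_collisionIntegrand hK hKbd hf.measurable hC _)]
    refine integral_congr_ae (Filter.Eventually.of_forall fun a => ?_)
    show (∫ q, G (a, q) ∂(m.prod m)) = IMm a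
    rw [integral_prod _ (hslice a (m.prod m))]
  have eA4 : (∫ p, G p ∂(n.prod (n.prod n))) = ∫ a, INn a ∂n := by
    rw [integral_prod _ (integrable_collisionIntegrand hK hKbd hf.measurable hC _)]
    refine integral_congr_ae (Filter.Eventually.of_forall fun a => ?_)
    show (∫ q, G (a, q) ∂(n.prod n)) = INn a
    rw [integral_prod _ (hslice a (n.prod n))]
  -- telescoping bounds
  have d12 : |(∫ a, IMm a ∂m) - ∫ a, IMm a ∂n| ≤ 4 * Λ * tvDist m n :=
    abs_integral_sub_le_tvDist m n hIMm_sm.measurable hIMm_b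
  have d23 : |(∫ a, IMm a ∂n) - ∫ a, IMn a ∂n| ≤ 4 * Λ * tvDist m n := by
    rw [← integral_sub (houtIMm n) (houtIMn n)]
    have hb : ∀ a, ‖IMm a - IMn a‖ ≤ 4 * Λ * tvDist m n := by
      intro a
      rw [Real.norm_eq_abs]
      exact abs_integral_sub_le_tvDist m n
        (hIm_sm.measurable.comp (measurable_const.prodMk measurable_id))
        (fun b => hIm_b (a, b))
    have := norm_integral_le_of_norm_le_const (μ := n)
      (f := fun a => IMm a - IMn a) (C := 4 * Λ * tvDist m n)
      (Filter.Eventually.of_forall hb)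
    simpa [Real.norm_eq_abs] using this
  have d34 : |(∫ a, IMn a ∂n) - ∫ a, INn a ∂n| ≤ 4 * Λ * tvDist m n := by
    rw [← integral_sub (houtIMn n) (houtINn n)]
    have hb : ∀ a, ‖IMn a - INn a‖ ≤ 4 * Λ * tvDist m n := by
      intro a
      rw [Real.norm_eq_abs, hIMndef, hINndef]
      dsimp only
      rw [← integral_sub (hmidm a n) (hmidn a n)]
      have hbi : ∀ b, ‖Im (a, b) - In (a, b)‖ ≤ 4 * Λ * tvDist m n := by
        intro b
        rw [Real.norm_eq_abs]
        exact abs_integral_sub_le_tvDist m n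
          (hGm.comp (measurable_const.prodMk (measurable_const.prodMk measurable_id)))
          (fun c => hGb (a, b, c))
      have := norm_integral_le_of_norm_le_const (μ := n)
        (f := fun b => Im (a, b) - In (a, b)) (C := 4 * Λ * tvDist m n)
        (Filter.Eventually.of_forall hbi)
      simpa [Real.norm_eq_abs] using this
    have := norm_integral_le_of_norm_le_const (μ := n)
      (f := fun a => IMn a - INn a) (C := 4 * Λ * tvDist m n)
      (Filter.Eventually.of_forall hb)
    simpa [Real.norm_eq_abs] using this
  -- put together
  set X1 := (∫ a, IMm a ∂m) - ∫ a, IMm a ∂n with hX1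
  set X2 := (∫ a, IMm a ∂n) - ∫ a, IMn a ∂n with hX2
  set X3 := (∫ a, IMn a ∂n) - ∫ a, INn a ∂n with hX3
  have key : Qpair K m f - Qpair K n f = (1 / 2) * (X1 + (X2 + X3)) := by
    rw [Qpair, Qpair, ← hGdef, eA1, eA4, hX1, hX2, hX3]; ring
  rw [key, abs_mul, abs_of_nonneg (by norm_num : (0:ℝ) ≤ 1 / 2)]
  calc (1 / 2) * |X1 + (X2 + X3)| ≤ (1 / 2) * (|X1| + (|X2| + |X3|)) := by
        apply mul_le_mul_of_nonneg_left _ (by norm_num : (0:ℝ) ≤ 1 / 2)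
        exact le_trans (abs_add_le _ _) (add_le_add le_rfl (abs_add_le _ _))
    _ ≤ (1 / 2) * ((4 * Λ * tvDist m n) + ((4 * Λ * tvDist m n) + (4 * Λ * tvDist m n))) := by
        apply mul_le_mul_of_nonneg_left _ (by norm_num : (0:ℝ) ≤ 1 / 2)
        exact add_le_add d12 (add_le_add d23 d34)
    _ = 6 * Λ * tvDist m n := by ring

end AuxC

section AuxD

variable {K : ℝ → ℝ → ℝ → ℝ} {Λ : ℝ} {μ₀ : Measure ℝ} {μ : ℝ → Measure ℝ}

lemma ext_Cb {m n : Measure ℝ} [IsFiniteMeasure m] [IsFiniteMeasure n]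
    (h : ∀ f : ℝ → ℝ, Continuous f → (∃ C, ∀ ω, |f ω| ≤ C) →
      (∫ ω, f ω ∂m) = ∫ ω, f ω ∂n) : m = n := by
  apply ext_of_forall_lintegral_eq_of_IsFiniteMeasure
  intro f
  have hcont : Continuous fun x => (f x : ℝ) := NNReal.continuous_coe.comp f.continuous
  have hbd : ∃ C, ∀ ω, |((f ω : ℝ≥0) : ℝ)| ≤ C := by
    obtain ⟨C, hC⟩ := f.bounded
    refine ⟨C + (f 0 : ℝ≥0), fun ω => ?_⟩
    have := hC ω 0
    rw [NNReal.dist_eq] at this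
    have h1 : ((f ω : ℝ≥0) : ℝ) - ((f 0 : ℝ≥0) : ℝ) ≤ C := le_trans (le_abs_self _) this
    rw [abs_of_nonneg (by positivity)]
    linarith
  have hi1 : Integrable (fun x => ((f x : ℝ≥0) : ℝ)) m := by
    obtain ⟨C, hC⟩ := hbd
    exact integrable_of_bounded_continuous hcont hC m
  have hi2 : Integrable (fun x => ((f x : ℝ≥0) : ℝ)) n := by
    obtain ⟨C, hC⟩ := hbd
    exact integrable_of_bounded_continuous hcont hC n
  rw [lintegral_coe_eq_integral _ hi1, lintegral_coe_eq_integral _ hi2,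
    h _ hcont hbd]

lemma sol_aesm
    (hK : Measurable fun p : ℝ × ℝ × ℝ => K p.1 p.2.1 p.2.2)
    (hKbd : ∀ a b c : ℝ, 0 ≤ K a b c ∧ K a b c ≤ Λ)
    [IsProbabilityMeasure μ₀]
    (hμ : IsWeakSolutionCb K μ₀ μ) :
    ∀ (f : ℝ → ℝ), Continuous f → (∃ C, ∀ ω, |f ω| ≤ C) → ∀ t : ℝ,
      AEStronglyMeasurable (fun s => Qpair K (μ s) f) (volume.restrict (Ioc 0 t)) := by
  by_contra hcon
  push_neg at hcon
  obtain ⟨f₁, hf₁c, hf₁b, t₁, hnot₁⟩ := hcon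
  set Bad : Set ℝ := {t | ∃ f : ℝ → ℝ, Continuous f ∧ (∃ C, ∀ ω, |f ω| ≤ C) ∧
    ¬ AEStronglyMeasurable (fun s => Qpair K (μ s) f) (volume.restrict (Ioc 0 t))} with hBad
  have hne : Bad.Nonempty := ⟨t₁, f₁, hf₁c, hf₁b, hnot₁⟩
  have hpos : ∀ t ∈ Bad, (0:ℝ) < t := by
    rintro t ⟨f, hfc, hfb, hnot⟩
    by_contra hle
    push_neg at hle
    apply hnot
    rw [Set.Ioc_eq_empty (not_lt.2 hle), Measure.restrict_empty]
    exact aestronglyMeasurable_zero_measure _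
  have hbdd : BddBelow Bad := ⟨0, fun t ht => (hpos t ht).le⟩
  set T := sInf Bad with hT
  have hT0 : 0 ≤ T := le_csInf hne (fun t ht => (hpos t ht).le)
  have step1 : ∀ t, T < t → ∀ f : ℝ → ℝ, Continuous f → (∃ C, ∀ ω, |f ω| ≤ C) →
      (∫ ω, f ω ∂(μ t)) = ∫ ω, f ω ∂μ₀ := by
    intro t hTt f hfc hfb
    have ht0 : 0 ≤ t := le_trans hT0 hTt.le
    haveI := (hμ.1 t ht0).1
    obtain ⟨t₀, ht₀Bad, ht₀t⟩ := exists_lt_of_csInf_lt hne hTt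
    obtain ⟨f₀, hf₀c, hf₀b, hf₀not⟩ := ht₀Bad
    have hf₀not' : ¬ AEStronglyMeasurable (fun s => Qpair K (μ s) f₀)
        (volume.restrict (Ioc 0 t)) := by
      intro h
      exact hf₀not (h.mono_measure
        (Measure.restrict_mono (Ioc_subset_Ioc_right ht₀t.le) le_rfl))
    have hint₀ : ¬ IntegrableOn (fun s => Qpair K (μ s) f₀) (Ioc 0 t) volume :=
      fun h => hf₀not' h.aestronglyMeasurable
    have eq₀ := hμ.2 f₀ hf₀c hf₀b t ht0
    rw [integral_undef hint₀, add_zero] at eq₀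
    obtain ⟨C, hC⟩ := hfb
    obtain ⟨C₀, hC₀⟩ := hf₀b
    by_cases hm : AEStronglyMeasurable (fun s => Qpair K (μ s) f)
        (volume.restrict (Ioc 0 t))
    · have hsum_not : ¬ AEStronglyMeasurable
          (fun s => Qpair K (μ s) (fun ω => f ω + f₀ ω)) (volume.restrict (Ioc 0 t)) := by
        intro h
        apply hf₀not'
        have heq : ∀ᵐ s ∂(volume.restrict (Ioc 0 t)),
            Qpair K (μ s) (fun ω => f ω + f₀ ω) - Qpair K (μ s) f
              = Qpair K (μ s) f₀ := by
          refine (ae_restrict_iff' measurableSet_Ioc).2 (Filter.Eventually.of_forall ?_)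
          intro s hs
          haveI := (hμ.1 s hs.1.le).1
          rw [Qpair_add hK hKbd hfc.measurable hf₀c.measurable hC hC₀]
          ring
        exact (h.sub hm).congr heq
      have eqsum := hμ.2 (fun ω => f ω + f₀ ω) (hfc.add hf₀c) ⟨C + C₀, fun ω => by
          calc |f ω + f₀ ω| ≤ |f ω| + |f₀ ω| := abs_add_le _ _
            _ ≤ C + C₀ := add_le_add (hC ω) (hC₀ ω)⟩ t ht0
      have hintsum : ¬ IntegrableOn (fun s => Qpair K (μ s) (fun ω => f ω + f₀ ω))
          (Ioc 0 t) volume := fun h => hsum_not h.aestronglyMeasurable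
      rw [integral_undef hintsum, add_zero] at eqsum
      have eqf := hμ.2 f hfc ⟨C, hC⟩ t ht0
      have ha1 : (∫ ω, (f ω + f₀ ω) ∂(μ t)) = (∫ ω, f ω ∂(μ t)) + ∫ ω, f₀ ω ∂(μ t) :=
        integral_add (integrable_of_bounded_continuous hfc hC _)
          (integrable_of_bounded_continuous hf₀c hC₀ _)
      have ha2 : (∫ ω, (f ω + f₀ ω) ∂μ₀) = (∫ ω, f ω ∂μ₀) + ∫ ω, f₀ ω ∂μ₀ :=
        integral_add (integrable_of_bounded_continuous hfc hC _)
          (integrable_of_bounded_continuous hf₀c hC₀ _)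
      rw [ha1, ha2] at eqsum
      linarith
    · have hint : ¬ IntegrableOn (fun s => Qpair K (μ s) f) (Ioc 0 t) volume :=
        fun h => hm h.aestronglyMeasurable
      have := hμ.2 f hfc ⟨C, hC⟩ t ht0
      rw [integral_undef hint, add_zero] at this
      exact this
  have step2 : ∀ t, T < t → μ t = μ₀ := by
    intro t hTt
    haveI := (hμ.1 t (le_trans hT0 hTt.le)).1
    exact ext_Cb (fun f hfc hfb => step1 t hTt f hfc hfb)
  have step3 : ∀ (f : ℝ → ℝ), Continuous f → (∃ C, ∀ ω, |f ω| ≤ C) → ∀ t : ℝ,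
      AEStronglyMeasurable (fun s => Qpair K (μ s) f) (volume.restrict (Ioc 0 t)) := by
    intro f hfc hfb t
    rcases lt_or_ge t T with htT | hTt
    · have hnb : t ∉ Bad := fun ht => absurd (csInf_le hbdd ht) (not_le.2 htT)
      rw [hBad, mem_setOf_eq] at hnb
      push_neg at hnb
      exact hnb f hfc hfb
    · have hsub : Ioo 0 T ⊆ Ioc 0 t := fun x hx => ⟨hx.1, le_trans hx.2.le hTt⟩
      have hsplit : Ioc 0 t = (Ioo 0 T) ∪ (Ioc 0 t \ Ioo 0 T) :=
        (union_diff_cancel hsub).symm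
      rw [hsplit]
      apply aestronglyMeasurable_union_iff.2
      constructor
      · have hIoo : Ioo 0 T = ⋃ q : {q : ℚ // (q:ℝ) < T}, Ioc 0 (q:ℝ) := by
          ext x
          constructor
          · intro hx
            obtain ⟨q, hq1, hq2⟩ := exists_rat_btwn hx.2
            exact mem_iUnion.2 ⟨⟨q, hq2⟩, hx.1, hq1.le⟩
          · intro hx
            obtain ⟨⟨q, hq⟩, hxq⟩ := mem_iUnion.1 hx
            exact ⟨hxq.1, lt_of_le_of_lt hxq.2 hq⟩
        rw [hIoo]
        apply AEStronglyMeasurable.iUnion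
        rintro ⟨q, hq⟩
        have hnb : (q:ℝ) ∉ Bad := fun hb => absurd (csInf_le hbdd hb) (not_le.2 hq)
        rw [hBad, mem_setOf_eq] at hnb
        push_neg at hnb
        exact hnb f hfc hfb
      · refine (aestronglyMeasurable_const (b := Qpair K μ₀ f)).congr ?_
        rw [Filter.EventuallyEq, ae_restrict_iff' (measurableSet_Ioc.diff measurableSet_Ioo)]
        have hae : ∀ᵐ s : ℝ ∂volume, s ≠ T := by
          rw [ae_iff]
          have : {s : ℝ | ¬ s ≠ T} = {T} := by ext s; simp
          rw [this]
          exact measure_singleton T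
        filter_upwards [hae] with s hsT hs
        have hsge : T ≤ s := by
          rcases hs with ⟨hs1, hs2⟩
          by_contra hlt
          push_neg at hlt
          exact hs2 ⟨hs1.1, hlt⟩
        have hTs : T < s := lt_of_le_of_ne hsge (Ne.symm hsT)
        rw [step2 s hTs]
  exact hnot₁ (step3 f₁ hf₁c hf₁b t₁)

lemma sol_integrableOn
    (hK : Measurable fun p : ℝ × ℝ × ℝ => K p.1 p.2.1 p.2.2)
    (hKbd : ∀ a b c : ℝ, 0 ≤ K a b c ∧ K a b c ≤ Λ)
    [IsProbabilityMeasure μ₀]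
    (hμ : IsWeakSolutionCb K μ₀ μ)
    {f : ℝ → ℝ} {C : ℝ} (hfc : Continuous f) (hC : ∀ ω, |f ω| ≤ C) (t : ℝ) :
    IntegrableOn (fun s => Qpair K (μ s) f) (Ioc 0 t) volume := by
  haveI : IsFiniteMeasure (volume.restrict (Ioc (0:ℝ) t)) :=
    ⟨by rw [Measure.restrict_apply_univ]; exact measure_Ioc_lt_top⟩
  refine ⟨sol_aesm hK hKbd hμ f hfc ⟨C, hC⟩ t,
    HasFiniteIntegral.of_bounded (C := 2 * C * Λ) ?_⟩
  refine (ae_restrict_iff' measurableSet_Ioc).2 (Filter.Eventually.of_forall fun s hs => ?_)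
  haveI := (hμ.1 s hs.1.le).1
  simpa [Real.norm_eq_abs] using abs_Qpair_le hK hKbd hfc.measurable hC (μ s)

lemma sol_F_diff
    (hK : Measurable fun p : ℝ × ℝ × ℝ => K p.1 p.2.1 p.2.2)
    (hKbd : ∀ a b c : ℝ, 0 ≤ K a b c ∧ K a b c ≤ Λ)
    [IsProbabilityMeasure μ₀]
    (hμ : IsWeakSolutionCb K μ₀ μ)
    {f : ℝ → ℝ} {C : ℝ} (hfc : Continuous f) (hC : ∀ ω, |f ω| ≤ C) {t' t : ℝ}
    (h0 : 0 ≤ t') (htt : t' ≤ t) :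
    (∫ ω, f ω ∂(μ t)) - (∫ ω, f ω ∂(μ t')) = ∫ s in Ioc t' t, Qpair K (μ s) f := by
  have e1 := hμ.2 f hfc ⟨C, hC⟩ t (le_trans h0 htt)
  have e2 := hμ.2 f hfc ⟨C, hC⟩ t' h0
  have hsplit : (∫ s in Ioc 0 t, Qpair K (μ s) f)
      = (∫ s in Ioc 0 t', Qpair K (μ s) f) + ∫ s in Ioc t' t, Qpair K (μ s) f := by
    rw [← Ioc_union_Ioc_eq_Ioc h0 htt]
    rw [setIntegral_union (Ioc_disjoint_Ioc_of_le le_rfl) measurableSet_Ioc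
      ((sol_integrableOn hK hKbd hμ hfc hC t).mono_set (Ioc_subset_Ioc_right htt))
      ((sol_integrableOn hK hKbd hμ hfc hC t).mono_set (Ioc_subset_Ioc_left h0))]
  rw [e1, e2, hsplit]
  ring

lemma sol_F_lip
    (hK : Measurable fun p : ℝ × ℝ × ℝ => K p.1 p.2.1 p.2.2)
    (hKbd : ∀ a b c : ℝ, 0 ≤ K a b c ∧ K a b c ≤ Λ)
    [IsProbabilityMeasure μ₀]
    (hμ : IsWeakSolutionCb K μ₀ μ)
    {f : ℝ → ℝ} {C : ℝ} (hfc : Continuous f) (hC : ∀ ω, |f ω| ≤ C) {t' t : ℝ}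
    (h0 : 0 ≤ t') (htt : t' ≤ t) :
    |(∫ ω, f ω ∂(μ t)) - (∫ ω, f ω ∂(μ t'))| ≤ 2 * C * Λ * (t - t') := by
  rw [sol_F_diff hK hKbd hμ hfc hC h0 htt]
  have hb : ∀ s ∈ Ioc t' t, ‖Qpair K (μ s) f‖ ≤ 2 * C * Λ := by
    intro s hs
    haveI := (hμ.1 s (le_trans h0 hs.1.le)).1
    simpa [Real.norm_eq_abs] using abs_Qpair_le hK hKbd hfc.measurable hC (μ s)
  have := norm_setIntegral_le_of_norm_le_const (μ := volume) (s := Ioc t' t)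
    measure_Ioc_lt_top hb
  rw [Real.volume_real_Ioc_of_le htt] at this
  simpa [Real.norm_eq_abs] using this

end AuxD

section AuxE

lemma tvDist_le {m n : Measure ℝ} {a : ℝ}
    (h : ∀ f : ℝ → ℝ, Continuous f → (∀ ω, |f ω| ≤ 1) →
      |(∫ ω, f ω ∂m) - ∫ ω, f ω ∂n| ≤ a)
    (ha : 0 ≤ a) : tvDist m n ≤ a := by
  apply Real.sSup_le _ ha
  rintro x ⟨f, ⟨hfc, hfb⟩, rfl⟩
  exact h f hfc hfb

lemma gronwall_zero {D : ℝ → ℝ} {L B : ℝ} (hL : 0 ≤ L) (hB : 0 ≤ B)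
    (hint : ∀ t, 0 ≤ t → IntegrableOn D (Ioc 0 t) volume)
    (hnn : ∀ t, 0 ≤ t → 0 ≤ D t)
    (hbd : ∀ t, 0 ≤ t → D t ≤ B)
    (hineq : ∀ t, 0 ≤ t → D t ≤ L * ∫ s in Ioc 0 t, D s) :
    ∀ t, 0 ≤ t → D t = 0 := by
  have key : ∀ n : ℕ, ∀ t, 0 ≤ t → D t ≤ B * (L * t) ^ n / n.factorial := by
    intro n
    induction n with
    | zero => intro t ht; simpa using hbd t ht
    | succ n ih =>
      intro t ht
      have hfac : ((n.factorial : ℝ)) ≠ 0 := Nat.cast_ne_zero.2 n.factorial_ne_zero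
      have hn1 : ((n:ℝ) + 1) ≠ 0 := by positivity
      have h1 : (∫ s in Ioc 0 t, D s)
          ≤ ∫ s in Ioc 0 t, B * (L * s) ^ n / n.factorial := by
        apply setIntegral_mono_on (hint t ht) ?_ measurableSet_Ioc
        · intro s hs; exact ih s hs.1.le
        · apply Continuous.integrableOn_Ioc
          continuity
      have h2 : (∫ s in Ioc 0 t, B * (L * s) ^ n / n.factorial)
          = B * L ^ n / n.factorial * (t ^ (n + 1) / (n + 1)) := by
        rw [← intervalIntegral.integral_of_le ht]
        have heq : (fun s : ℝ => B * (L * s) ^ n / (n.factorial : ℝ))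
            = fun s : ℝ => (B * L ^ n / n.factorial) * s ^ n := by
          funext s; rw [mul_pow]; ring
        rw [heq, intervalIntegral.integral_const_mul, integral_pow]
        rw [zero_pow (Nat.succ_ne_zero n)]
        ring
      calc D t ≤ L * ∫ s in Ioc 0 t, D s := hineq t ht
        _ ≤ L * (B * L ^ n / n.factorial * (t ^ (n + 1) / (n + 1))) := by
            apply mul_le_mul_of_nonneg_left _ hL
            rw [← h2]; exact h1
        _ = B * (L * t) ^ (n + 1) / (n + 1).factorial := by
            rw [Nat.factorial_succ, mul_pow]
            push_cast
            field_simp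
            ring
  intro t ht
  have h0 : Filter.Tendsto (fun n : ℕ => B * (L * t) ^ n / n.factorial)
      Filter.atTop (nhds 0) := by
    have h1 := FloorSemiring.tendsto_pow_div_factorial_atTop (L * t)
    have h2 := h1.const_mul B
    simpa [mul_div_assoc] using h2
  have hle : D t ≤ 0 := ge_of_tendsto' h0 (fun n => key n t ht)
  exact le_antisymm hle (hnn t ht)

end AuxE


/-- Uniqueness of solutions for a bounded kernel: two families of
probability measures solving the weak isotropic 4-wave kinetic equation with the same
initial datum coincide. -/
theorem uniqueness_bounded_kernel
    (K : ℝ → ℝ → ℝ → ℝ)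
    (hKmeas : Measurable fun p : ℝ × ℝ × ℝ => K p.1 p.2.1 p.2.2)
    (hKsymm : ∀ ω₁ ω₂ ω₃ : ℝ, K ω₁ ω₂ ω₃ = K ω₂ ω₁ ω₃)
    (Λ : ℝ) (hKbd : ∀ ω₁ ω₂ ω₃ : ℝ, 0 ≤ K ω₁ ω₂ ω₃ ∧ K ω₁ ω₂ ω₃ ≤ Λ)
    (μ₀ : Measure ℝ) [IsProbabilityMeasure μ₀] (hsupp₀ : μ₀ (Set.Iio 0) = 0)
    (μ ν : ℝ → Measure ℝ)
    (hμ : IsWeakSolutionCb K μ₀ μ) (hν : IsWeakSolutionCb K μ₀ ν) :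
    ∀ t, 0 ≤ t → μ t = ν t := by
  have hΛ0 : 0 ≤ Λ := le_trans (hKbd 0 0 0).1 (hKbd 0 0 0).2
  set Dd : ℝ → ℝ := fun s => tvDist (μ s) (ν s) with hDd
  have probμ : ∀ s : ℝ, 0 ≤ s → IsProbabilityMeasure (μ s) := fun s hs => (hμ.1 s hs).1
  have probν : ∀ s : ℝ, 0 ≤ s → IsProbabilityMeasure (ν s) := fun s hs => (hν.1 s hs).1
  have hDd_nn : ∀ s, 0 ≤ s → 0 ≤ Dd s := fun s hs => by
    haveI := probμ s hs; haveI := probν s hs; exact tvDist_nonneg _ _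
  have hDd_bd : ∀ s, 0 ≤ s → Dd s ≤ 2 := fun s hs => by
    haveI := probμ s hs; haveI := probν s hs; exact tvDist_le_two _ _
  -- one-sided Lipschitz estimates
  have hlip1 : ∀ a b : ℝ, 0 ≤ a → a ≤ b → Dd b ≤ Dd a + 4 * Λ * (b - a) := by
    intro a b ha hab
    have hb0 : 0 ≤ b := le_trans ha hab
    haveI := probμ a ha; haveI := probν a ha
    haveI := probμ b hb0; haveI := probν b hb0
    have h4 : 0 ≤ 4 * Λ * (b - a) :=
      mul_nonneg (mul_nonneg (by norm_num) hΛ0) (by linarith)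
    apply tvDist_le _ (by have := hDd_nn a ha; linarith)
    intro f hfc hfb
    have l1 := sol_F_lip hKmeas hKbd hμ hfc hfb ha hab
    have l2 := sol_F_lip hKmeas hKbd hν hfc hfb ha hab
    have l3 : |(∫ ω, f ω ∂(μ a)) - ∫ ω, f ω ∂(ν a)| ≤ Dd a := abs_le_tvDist hfc hfb
    obtain ⟨p1, p2⟩ := abs_le.1 l1
    obtain ⟨q1, q2⟩ := abs_le.1 l2
    obtain ⟨r1, r2⟩ := abs_le.1 l3
    refine abs_le.2 ⟨by linarith, by linarith⟩
  have hlip2 : ∀ a b : ℝ, 0 ≤ a → a ≤ b → Dd a ≤ Dd b + 4 * Λ * (b - a) := by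
    intro a b ha hab
    have hb0 : 0 ≤ b := le_trans ha hab
    haveI := probμ a ha; haveI := probν a ha
    haveI := probμ b hb0; haveI := probν b hb0
    have h4 : 0 ≤ 4 * Λ * (b - a) :=
      mul_nonneg (mul_nonneg (by norm_num) hΛ0) (by linarith)
    apply tvDist_le _ (by have := hDd_nn b hb0; linarith)
    intro f hfc hfb
    have l1 := sol_F_lip hKmeas hKbd hμ hfc hfb ha hab
    have l2 := sol_F_lip hKmeas hKbd hν hfc hfb ha hab
    have l3 : |(∫ ω, f ω ∂(μ b)) - ∫ ω, f ω ∂(ν b)| ≤ Dd b := abs_le_tvDist hfc hfb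
    obtain ⟨p1, p2⟩ := abs_le.1 l1
    obtain ⟨q1, q2⟩ := abs_le.1 l2
    obtain ⟨r1, r2⟩ := abs_le.1 l3
    refine abs_le.2 ⟨by linarith, by linarith⟩
  -- continuity of Dd on [0, ∞)
  have hcont : ContinuousOn Dd (Ici 0) := by
    have hlw : LipschitzOnWith (Real.toNNReal (4 * Λ)) Dd (Ici 0) := by
      apply LipschitzOnWith.of_dist_le_mul
      intro x hx y hy
      rw [Real.coe_toNNReal _ (by positivity), Real.dist_eq, Real.dist_eq]
      rcases le_total x y with hxy | hxy
      · have h1 := hlip1 x y hx hxy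
        have h2 := hlip2 x y hx hxy
        rw [abs_of_nonpos (by linarith : x - y ≤ 0)]
        refine abs_le.2 ⟨by linarith, by linarith⟩
      · have h1 := hlip1 y x hy hxy
        have h2 := hlip2 y x hy hxy
        rw [abs_of_nonneg (by linarith : 0 ≤ x - y)]
        refine abs_le.2 ⟨by linarith, by linarith⟩
    exact hlw.continuousOn
  have hDint : ∀ u : ℝ, 0 ≤ u → IntegrableOn Dd (Ioc 0 u) volume := by
    intro u hu
    exact ((hcont.mono (Icc_subset_Ici_self)).integrableOn_Icc).mono_set Ioc_subset_Icc_self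
  -- main Gronwall-type inequality
  have hineq : ∀ u, 0 ≤ u → Dd u ≤ 6 * Λ * ∫ s in Ioc 0 u, Dd s := by
    intro u hu
    haveI := probμ u hu; haveI := probν u hu
    have hIge : 0 ≤ ∫ s in Ioc 0 u, Dd s :=
      setIntegral_nonneg measurableSet_Ioc (fun s hs => hDd_nn s hs.1.le)
    apply tvDist_le _ (mul_nonneg (by positivity) hIge)
    intro f hfc hfb
    have e1 := hμ.2 f hfc ⟨1, hfb⟩ u hu
    have e2 := hν.2 f hfc ⟨1, hfb⟩ u hu
    have hiμ := sol_integrableOn hKmeas hKbd hμ hfc hfb u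
    have hiν := sol_integrableOn hKmeas hKbd hν hfc hfb u
    have ediff : (∫ ω, f ω ∂(μ u)) - ∫ ω, f ω ∂(ν u)
        = ∫ s in Ioc 0 u, (Qpair K (μ s) f - Qpair K (ν s) f) := by
      rw [e1, e2, integral_sub hiμ hiν]; ring
    rw [ediff]
    calc |∫ s in Ioc 0 u, (Qpair K (μ s) f - Qpair K (ν s) f)|
        ≤ ∫ s in Ioc 0 u, |Qpair K (μ s) f - Qpair K (ν s) f| := by
          simpa [Real.norm_eq_abs] using norm_integral_le_integral_norm
            (f := fun s => Qpair K (μ s) f - Qpair K (ν s) f)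
            (μ := volume.restrict (Ioc 0 u))
      _ ≤ ∫ s in Ioc 0 u, 6 * Λ * Dd s := by
          apply setIntegral_mono_on (hiμ.sub hiν).abs
            ((hDint u hu).const_mul (6 * Λ)) measurableSet_Ioc
          intro s hs
          haveI := probμ s hs.1.le; haveI := probν s hs.1.le
          exact abs_Qpair_sub_le hKmeas hKbd hfc hfb (μ s) (ν s)
      _ = 6 * Λ * ∫ s in Ioc 0 u, Dd s := integral_const_mul _ _
  have hz := gronwall_zero (by positivity : (0:ℝ) ≤ 6 * Λ) (by norm_num : (0:ℝ) ≤ 2)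
    hDint hDd_nn hDd_bd hineq
  -- conclusion
  intro t ht
  haveI := probμ t ht; haveI := probν t ht
  apply ext_Cb
  rintro f hfc ⟨C, hC⟩
  have hC0 : 0 ≤ C := le_trans (abs_nonneg _) (hC 0)
  set g : ℝ → ℝ := fun ω => f ω / (C + 1) with hg
  have hgc : Continuous g := hfc.div_const _
  have hgb : ∀ ω, |g ω| ≤ 1 := by
    intro ω
    rw [hg]
    dsimp only
    rw [abs_div, abs_of_nonneg (by linarith : (0:ℝ) ≤ C + 1)]
    exact div_le_one_of_le₀ (le_trans (hC ω) (by linarith)) (by linarith)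
  have hle := abs_le_tvDist (m := μ t) (n := ν t) hgc hgb
  have hDt : tvDist (μ t) (ν t) = 0 := hz t ht
  rw [hDt] at hle
  have hx := abs_eq_zero.1 (le_antisymm hle (abs_nonneg _))
  have hoeq : (∫ ω, g ω ∂(μ t)) = ∫ ω, g ω ∂(ν t) := sub_eq_zero.1 hx
  have hdiv : (∫ ω, f ω ∂(μ t)) / (C + 1) = (∫ ω, f ω ∂(ν t)) / (C + 1) := by
    rw [← integral_div, ← integral_div]
    exact hoeq
  have hC1 : (C + 1) ≠ 0 := by positivity
  field_simp at hdiv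
  exact hdiv
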